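/- The group μ_L of roots of unity contained in L = ℚ^(2) is finite. -/

import Mathlib

open Polynomial

/-- `ℚ^(2)`: the compositum, inside a fixed algebraic closure of `ℚ`, of all extensions
of `ℚ` of degree at most 2. -/
noncomputable def Qsqrt2 : IntermediateField ℚ (AlgebraicClosure ℚ) :=
  ⨆ F ∈ {F : IntermediateField ℚ (AlgebraicClosure ℚ) | Module.rank ℚ F ≤ 2}, F

private lemma aux_dvd_24 {m : ℕ} (hm : 0 < m)
    (h : ∀ u : ℕ, 2 ≤ u → Nat.Coprime u m → m ∣ u ^ 2 - 1) : m ∣ 24 := by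
  by_cases h5 : 5 ∣ m
  · exfalso
    have hm0 : m ≠ 0 := hm.ne'
    set a := 5 ^ m.factorization 5 with ha
    set b := m / 5 ^ m.factorization 5 with hb
    have hcop : Nat.Coprime a b :=
      Nat.Coprime.pow_left _ (Nat.coprime_ordCompl (by norm_num) hm0)
    obtain ⟨u, hu1, hu2⟩ := Nat.chineseRemainder hcop 2 1
    have hk : 0 < m.factorization 5 :=
      Nat.Prime.factorization_pos_of_dvd (by norm_num) hm0 h5
    have h5a : 5 ∣ a := dvd_pow_self 5 hk.ne'
    have hagt : 5 ≤ a := Nat.le_of_dvd (Nat.pow_pos (by norm_num)) h5a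
    have hu5 : u % 5 = 2 := by
      have h25 : u ≡ 2 [MOD 5] := hu1.of_dvd h5a
      have : u % 5 = 2 % 5 := h25
      omega
    have hu_ge : 2 ≤ u := by omega
    have hcopu : Nat.Coprime u m := by
      have hmab : a * b = m := Nat.ordProj_mul_ordCompl_eq_self m 5
      have h1 : Nat.Coprime u a := by
        rw [ha, Nat.coprime_pow_right_iff hk]
        rw [Nat.coprime_comm, Nat.Prime.coprime_iff_not_dvd (by norm_num)]
        omega
      have h2 : Nat.Coprime u b := by
        have hdb : b ∣ u - 1 := (Nat.modEq_iff_dvd' (by omega)).mp hu2.symm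
        obtain ⟨t, ht⟩ := hdb
        have hut : u = 1 + b * t := by omega
        rw [hut, Nat.coprime_add_mul_left_left]
        exact Nat.coprime_one_left b
      rw [← hmab]
      exact Nat.Coprime.mul_right h1 h2
    have hdvd := h u hu_ge hcopu
    have h5u : 5 ∣ u ^ 2 - 1 := dvd_trans h5 hdvd
    have husq : u ^ 2 % 5 = 4 := by
      rw [Nat.pow_mod, hu5]
    have hge : 4 ≤ u ^ 2 := by nlinarith
    omega
  · have cop : Nat.Coprime 5 m := (Nat.Prime.coprime_iff_not_dvd (by norm_num)).mpr h5
    have := h 5 (by norm_num) cop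
    simpa using this

private lemma sq_fix (σ : AlgebraicClosure ℚ ≃ₐ[ℚ] AlgebraicClosure ℚ)
    {x : AlgebraicClosure ℚ} (hx : x ∈ Qsqrt2) : σ (σ x) = x := by
  let Q := AlgebraicClosure ℚ
  let τ : Q →ₐ[ℚ] Q := σ.toAlgHom.comp σ.toAlgHom
  let K : IntermediateField ℚ Q :=
    (AlgHom.equalizer τ (AlgHom.id ℚ Q)).toIntermediateField (fun y hy => by
      have h1 : τ y = y := hy
      show τ y⁻¹ = (AlgHom.id ℚ Q) y⁻¹
      simp only [AlgHom.id_apply]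
      rw [map_inv₀, h1])
  have hK : Qsqrt2 ≤ K := by
    apply iSup₂_le
    intro F hF z hzF
    have hfin : Module.Finite ℚ F := by
      rw [← Module.rank_lt_aleph0_iff]
      exact hF.trans_lt (by simpa using Cardinal.nat_lt_aleph0 2)
    have hfr : Module.finrank ℚ F ≤ 2 := Module.finrank_le_of_rank_le (by simpa using hF)
    set y : F := ⟨z, hzF⟩ with hy
    have hzy : algebraMap F Q y = z := rfl
    have hint : IsIntegral ℚ y := IsIntegral.of_finite ℚ y
    set p : ℚ[X] := minpoly ℚ y with hp
    have hdeg : p.natDegree ≤ 2 := le_trans (minpoly.natDegree_le y) hfr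
    have hdpos : 0 < p.natDegree := minpoly.natDegree_pos hint
    have hpz : minpoly ℚ z = p := by
      rw [← hzy]
      exact minpoly.algebraMap_eq (algebraMap F Q).injective y
    have hmon : p.Monic := minpoly.monic hint
    have h1 : aeval z p = 0 := by rw [← hpz]; exact minpoly.aeval ℚ z
    have h2 : aeval (σ z) p = 0 := by
      have h' : aeval (σ.toAlgHom z) p = σ.toAlgHom (aeval z p) := aeval_algHom_apply σ.toAlgHom z p
      simpa [h1] using h'
    show τ z = (AlgHom.id ℚ Q) z
    simp only [AlgHom.id_apply]
    show σ (σ z) = z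
    set c0 : Q := algebraMap ℚ Q (p.coeff 0) with hc0
    set c1 : Q := algebraMap ℚ Q (p.coeff 1) with hc1
    interval_cases hd : p.natDegree
    · -- degree 1
      have hcoe1 : p.coeff 1 = 1 := by
        have := hmon.coeff_natDegree
        rwa [hd] at this
      have hexp : ∀ w : Q, aeval w p = c0 + w := by
        intro w
        rw [aeval_eq_sum_range' (n := 2) (by omega)]
        simp [Finset.sum_range_succ, Algebra.smul_def, hcoe1, hc0]
      have e1 : c0 + z = 0 := by rw [← hexp]; exact h1
      have e2 : c0 + σ z = 0 := by rw [← hexp]; exact h2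
      have : σ z = z := by
        have : σ z = -c0 := by linear_combination e2
        rw [this]
        linear_combination -e1
      rw [this, this]
    · -- degree 2
      have hcoe2 : p.coeff 2 = 1 := by
        have := hmon.coeff_natDegree
        rwa [hd] at this
      have hexp : ∀ w : Q, aeval w p = c0 + c1 * w + w ^ 2 := by
        intro w
        rw [aeval_eq_sum_range' (n := 3) (by omega)]
        simp [Finset.sum_range_succ, Algebra.smul_def, hcoe2, hc0, hc1]
        try ring
      have e1 : c0 + c1 * z + z ^ 2 = 0 := by rw [← hexp]; exact h1
      have e2 : c0 + c1 * σ z + (σ z) ^ 2 = 0 := by rw [← hexp]; exact h2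
      have key : (σ z - z) * (σ z + z + c1) = 0 := by linear_combination e2 - e1
      rcases mul_eq_zero.mp key with h | h
      · have hz : σ z = z := by linear_combination h
        rw [hz, hz]
      · have hz : σ z = -c1 - z := by linear_combination h
        rw [hz, map_sub, map_neg, hc1, AlgEquiv.commutes, hz]
        ring
  exact hK hx

/-- The group of roots of unity of `L = ℚ^(2)` is finite. -/
theorem rootsOfUnity_Qsqrt2_finite :
    {x : ↥Qsqrt2 | ∃ n : ℕ, 0 < n ∧ x ^ n = 1}.Finite := by
  let Q := AlgebraicClosure ℚ
  have key : ∀ x ∈ {x : ↥Qsqrt2 | ∃ n : ℕ, 0 < n ∧ x ^ n = 1}, x ^ 24 = 1 := by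
    rintro x ⟨n, hn, hxn⟩
    have hxQ : (x : Q) ^ n = 1 := by
      have := congrArg (fun t : ↥Qsqrt2 => (t : Q)) hxn
      push_cast at this
      exact_mod_cast this
    have hx0 : (x : Q) ≠ 0 := by
      intro h0
      rw [h0] at hxQ
      simp [zero_pow hn.ne'] at hxQ
    have hfin : IsOfFinOrder (x : Q) := isOfFinOrder_iff_pow_eq_one.mpr ⟨n, hn, hxQ⟩
    set m := orderOf (x : Q) with hm
    have hm0 : 0 < m := hfin.orderOf_pos
    have hprim : IsPrimitiveRoot (x : Q) m := IsPrimitiveRoot.orderOf _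
    have hdvd : m ∣ 24 := by
      apply aux_dvd_24 hm0
      intro u hu hcop
      have hprimu : IsPrimitiveRoot ((x : Q) ^ u) m := hprim.pow_of_coprime u hcop
      have hmin : aeval (x : Q) (minpoly ℚ ((x : Q) ^ u)) = 0 := by
        rw [← Polynomial.cyclotomic_eq_minpoly_rat hprimu hm0]
        simpa [aeval_def, eval₂_eq_eval_map, IsRoot.def] using hprim.isRoot_cyclotomic hm0
      haveI : Algebra.IsAlgebraic ℚ Q := by exact AlgebraicClosure.isAlgebraic ℚ
      haveI : Normal ℚ Q := by
        exact @IsAlgClosure.normal ℚ (AlgebraicClosure ℚ) _ _ (AlgebraicClosure.instAlgebra ℚ) (AlgebraicClosure.instIsAlgClosure ℚ)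
      obtain ⟨σ, hσ⟩ := minpoly.exists_algEquiv_of_root
        (Algebra.IsAlgebraic.isAlgebraic ((x : Q) ^ u)) hmin
      have hfix : σ (σ (x : Q)) = x := sq_fix σ x.2
      have e : (x : Q) ^ (u ^ 2) = x := by
        have h' : σ (σ (x : Q)) = ((x : Q) ^ u) ^ u := by rw [hσ, map_pow, hσ]
        rw [← pow_mul] at h'
        rw [show u ^ 2 = u * u from pow_two u, ← h', hfix]
      have e' : (x : Q) ^ (u ^ 2 - 1) = 1 := by
        have hpos2 : 0 < u ^ 2 := pow_pos (by omega) 2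
        have h21 : u ^ 2 = (u ^ 2 - 1) + 1 := by omega
        rw [h21, pow_succ] at e
        field_simp at e
        exact e
      exact orderOf_dvd_of_pow_eq_one e'
    have h24 : (x : Q) ^ 24 = 1 := by
      obtain ⟨k, hk⟩ := hdvd
      rw [hk, pow_mul, pow_orderOf_eq_one, one_pow]
    have : ((x ^ 24 : ↥Qsqrt2) : Q) = ((1 : ↥Qsqrt2) : Q) := by
      push_cast
      exact h24
    exact_mod_cast Subtype.coe_injective this
  classical
  have hfin24 : {z : Q | z ^ 24 = 1}.Finite := by
    apply Set.Finite.subset (Polynomial.nthRoots 24 (1 : Q)).toFinset.finite_toSet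
    intro z hz
    simp only [Finset.mem_coe, Multiset.mem_toFinset,
      Polynomial.mem_nthRoots (by norm_num : (0:ℕ) < 24)]
    exact hz
  have hpre : {x : ↥Qsqrt2 | ∃ n : ℕ, 0 < n ∧ x ^ n = 1} ⊆
      (fun y : ↥Qsqrt2 => (y : Q)) ⁻¹' {z : Q | z ^ 24 = 1} := by
    intro x hx
    have h := key x hx
    show (x : Q) ^ 24 = 1
    have h' : ((x ^ 24 : ↥Qsqrt2) : Q) = 1 := by rw [h]; rfl
    push_cast at h'
    exact h'
  exact Set.Finite.subset (Set.Finite.preimage (Subtype.val_injective.injOn) hfin24) hpre
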